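/- Let σ(n) denote the sum of all positive divisors of n. For every complex number x with |x| < 1, ∑_{n=1}^∞ σ(n) x^n = ∑_{m=1}^∞ m x^m / (1 − x^m), both series converging absolutely (the Lambert series for the sum-of-divisors function). -/

import Mathlib

set_option maxHeartbeats 1000000

open ArithmeticFunction
open scoped ArithmeticFunction.sigma

private lemma sigma_le_sq (n : ℕ) : (σ 1 n : ℕ) ≤ n * n := by
  rw [sigma_one_apply]
  calc ∑ d ∈ n.divisors, d ≤ ∑ _d ∈ n.divisors, n :=
        Finset.sum_le_sum fun d hd => Nat.divisor_le hd
    _ = n.divisors.card * n := by rw [Finset.sum_const, smul_eq_mul]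
    _ ≤ n * n := by
        refine Nat.mul_le_mul_right n ?_
        calc n.divisors.card ≤ (Finset.Icc 1 n).card := by
              refine Finset.card_le_card fun d hd => ?_
              exact Finset.mem_Icc.mpr ⟨Nat.pos_of_mem_divisors hd, Nat.divisor_le hd⟩
          _ = n := by rw [Nat.card_Icc]; omega

/-- The Lambert series for the sum-of-divisors function: for `‖x‖ < 1`,
`∑_{n=1}^∞ σ(n) x^n = ∑_{m=1}^∞ m x^m / (1 - x^m)`, both series converging
absolutely. -/
theorem lambert_series_sigma (x : ℂ) (hx : ‖x‖ < 1) :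
    Summable (fun n : ℕ => ‖(σ 1 (n + 1) : ℂ) * x ^ (n + 1)‖) ∧
    Summable (fun m : ℕ => ‖((m : ℂ) + 1) * x ^ (m + 1) / (1 - x ^ (m + 1))‖) ∧
    ∑' n : ℕ, (σ 1 (n + 1) : ℂ) * x ^ (n + 1) =
      ∑' m : ℕ, ((m : ℂ) + 1) * x ^ (m + 1) / (1 - x ^ (m + 1)) := by
  rcases eq_or_ne x 0 with rfl | hx0
  · refine ⟨?_, ?_, ?_⟩
    · refine (summable_zero (α := ℝ) (β := ℕ)).congr fun n => ?_
      simp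
    · refine (summable_zero (α := ℝ) (β := ℕ)).congr fun m => ?_
      simp
    · simp
  have hr0 : 0 < ‖x‖ := norm_pos_iff.mpr hx0
  set r : ℝ := ‖x‖ with hrdef
  -- basic facts
  have hrr : ∀ m : ℕ, ‖x ^ m‖ = r ^ m := fun m => norm_pow x m
  have hr1 : ∀ m : ℕ, r ^ (m + 1) ≤ r := by
    intro m
    calc r ^ (m + 1) ≤ r ^ 1 := pow_le_pow_of_le_one hr0.le hx.le (by omega)
      _ = r := pow_one r
  have hden : ∀ m : ℕ, (1 : ℝ) - r ≤ ‖1 - x ^ (m + 1)‖ := by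
    intro m
    have h1 : ‖(1 : ℂ)‖ - ‖x ^ (m + 1)‖ ≤ ‖1 - x ^ (m + 1)‖ := norm_sub_norm_le _ _
    rw [norm_one, hrr] at h1
    linarith [hr1 m]
  have hdenpos : (0 : ℝ) < 1 - r := by linarith
  have hxm1 : ∀ m : ℕ, ‖x ^ (m + 1)‖ < 1 := by
    intro m; rw [hrr]; exact lt_of_le_of_lt (hr1 m) hx
  have hxmne : ∀ m : ℕ, (1 : ℂ) - x ^ (m + 1) ≠ 0 := by
    intro m h
    have := hxm1 m
    rw [sub_eq_zero] at h
    rw [← h] at this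
    simp at this
  -- summable helper: (n+1) * r^(n+1) and (n+1)^2 * r^(n+1)
  have hrn : ‖r‖ < 1 := by rwa [Real.norm_of_nonneg hr0.le]
  have hA : Summable fun n : ℕ => (n : ℝ) * r ^ n := by
    simpa using summable_pow_mul_geometric_of_norm_lt_one 1 hrn
  have hA2 : Summable fun n : ℕ => (n : ℝ) ^ 2 * r ^ n :=
    summable_pow_mul_geometric_of_norm_lt_one 2 hrn
  -- first conjunct
  have conj1 : Summable (fun n : ℕ => ‖(σ 1 (n + 1) : ℂ) * x ^ (n + 1)‖) := by
    have hb : Summable fun n : ℕ => ((n + 1 : ℕ) : ℝ) ^ 2 * r ^ (n + 1) :=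
      (summable_nat_add_iff 1).mpr hA2
    refine Summable.of_nonneg_of_le (fun n => norm_nonneg _) (fun n => ?_) hb
    rw [norm_mul, hrr]
    have h1 : ‖((σ 1 (n + 1) : ℕ) : ℂ)‖ ≤ ((n + 1 : ℕ) : ℝ) ^ 2 := by
      rw [Complex.norm_natCast]
      have := sigma_le_sq (n + 1)
      calc ((σ 1 (n + 1) : ℕ) : ℝ) ≤ ((n + 1) * (n + 1) : ℕ) := by exact_mod_cast this
        _ = ((n + 1 : ℕ) : ℝ) ^ 2 := by push_cast; ring
    exact mul_le_mul_of_nonneg_right h1 (pow_nonneg hr0.le _)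
  -- second conjunct
  have conj2 : Summable (fun m : ℕ => ‖((m : ℂ) + 1) * x ^ (m + 1) / (1 - x ^ (m + 1))‖) := by
    have hb : Summable fun m : ℕ => ((m + 1 : ℕ) : ℝ) * r ^ (m + 1) * (1 - r)⁻¹ :=
      ((summable_nat_add_iff 1).mpr hA).mul_right _
    refine Summable.of_nonneg_of_le (fun m => norm_nonneg _) (fun m => ?_) hb
    rw [norm_div, norm_mul, hrr]
    have hnum : ‖(m : ℂ) + 1‖ = ((m + 1 : ℕ) : ℝ) := by
      have : (m : ℂ) + 1 = ((m + 1 : ℕ) : ℂ) := by push_cast; ring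
      rw [this, Complex.norm_natCast]
    rw [hnum, div_eq_mul_inv]
    refine mul_le_mul_of_nonneg_left ?_ (by positivity)
    exact inv_anti₀ hdenpos (hden m)
  refine ⟨conj1, conj2, ?_⟩
  -- the double sum
  set F : ℕ × ℕ → ℂ := fun p => if p.2 = 0 then 0 else (p.1 : ℂ) * x ^ (p.1 * p.2) with hFdef
  have hFnorm : Summable fun p : ℕ × ℕ => ‖F p‖ := by
    have hB : Summable fun b : ℕ => r ^ b * r⁻¹ :=
      (summable_geometric_of_lt_one hr0.le hx).mul_right _
    have hG : Summable fun p : ℕ × ℕ => ((p.1 : ℝ) * r ^ p.1) * (r ^ p.2 * r⁻¹) :=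
      hA.mul_of_nonneg hB (fun a => by positivity) (fun b => by positivity)
    refine Summable.of_nonneg_of_le (fun p => norm_nonneg _) (fun p => ?_) hG
    obtain ⟨a, b⟩ := p
    rcases Nat.eq_zero_or_pos b with rfl | hb
    · simp only [hFdef, if_pos rfl, norm_zero]
      positivity
    rcases Nat.eq_zero_or_pos a with rfl | ha
    · simp only [hFdef]
      simp only [Nat.cast_zero, zero_mul, ite_self, norm_zero]
      positivity
    have hb0 : b ≠ 0 := hb.ne'
    simp only [hFdef, if_neg hb0, norm_mul, hrr, Complex.norm_natCast]
    have hexp : a + b - 1 ≤ a * b := by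
      obtain ⟨a', rfl⟩ : ∃ a', a = a' + 1 := ⟨a - 1, by omega⟩
      obtain ⟨b', rfl⟩ : ∃ b', b = b' + 1 := ⟨b - 1, by omega⟩
      have h : a' + 1 + (b' + 1) - 1 = a' + b' + 1 := by omega
      rw [h]
      nlinarith
    have h1 : r ^ (a * b) ≤ r ^ (a + b - 1) := pow_le_pow_of_le_one hr0.le hx.le hexp
    have h2 : r ^ (a + b - 1) = r ^ a * (r ^ b * r⁻¹) := by
      have : a + b - 1 + 1 = a + b := by omega
      field_simp
      rw [← pow_succ, this, pow_add]
    calc (a : ℝ) * r ^ (a * b) ≤ (a : ℝ) * r ^ (a + b - 1) :=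
          mul_le_mul_of_nonneg_left h1 (by positivity)
      _ = (a : ℝ) * r ^ a * (r ^ b * r⁻¹) := by rw [h2]; ring
  have hF : Summable F := hFnorm.of_norm
  set S : ℂ := ∑' p : ℕ × ℕ, F p with hSdef
  have hFS : HasSum F S := hF.hasSum
  -- n-side: fiberwise over p.1 * p.2
  have hfib := hFS.tsum_fiberwise (fun p : ℕ × ℕ => p.1 * p.2)
  have hg0 : ∑' p : (fun p : ℕ × ℕ => p.1 * p.2) ⁻¹' {0}, F p = 0 := by
    have : ∀ p : (fun p : ℕ × ℕ => p.1 * p.2) ⁻¹' {0}, F p = 0 := by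
      rintro ⟨⟨a, b⟩, hp⟩
      simp only [Set.mem_preimage, Set.mem_singleton_iff, Nat.mul_eq_zero] at hp
      rcases hp with rfl | rfl
      · simp [hFdef]
      · simp [hFdef]
    simp only [this, tsum_zero]
  have hgn : ∀ n : ℕ, ∑' p : (fun p : ℕ × ℕ => p.1 * p.2) ⁻¹' {n + 1}, F p
      = (σ 1 (n + 1) : ℂ) * x ^ (n + 1) := by
    intro n
    have hn1 : (n + 1 : ℕ) ≠ 0 := Nat.succ_ne_zero n
    rw [show (fun p : ℕ × ℕ => p.1 * p.2) ⁻¹' {n + 1} = ↑(n + 1).divisorsAntidiagonal by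
        ext p; simp [Nat.mem_divisorsAntidiagonal, hn1, eq_comm],
      Finset.tsum_subtype' ((n + 1).divisorsAntidiagonal) F]
    have : ∀ p ∈ (n + 1).divisorsAntidiagonal, F p = (p.1 : ℂ) * x ^ (n + 1) := by
      intro p hp
      obtain ⟨hp1, hp2⟩ := Nat.mem_divisorsAntidiagonal.mp hp
      have hb : p.2 ≠ 0 := by
        intro h; rw [h, mul_zero] at hp1; exact hn1 hp1.symm
      simp only [hFdef, if_neg hb, hp1]
    rw [Finset.sum_congr rfl this, Nat.sum_divisorsAntidiagonal (fun a b => (a : ℂ) * x ^ (n + 1)),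
      ← Finset.sum_mul, sigma_one_apply]
    push_cast
    ring
  have hSn : HasSum (fun n : ℕ => (σ 1 (n + 1) : ℂ) * x ^ (n + 1)) S := by
    have h1 := (hasSum_nat_add_iff' 1).mpr hfib
    simp only [Finset.range_one, Finset.sum_singleton, hg0, sub_zero] at h1
    exact h1.congr_fun fun n => (hgn n).symm
  -- m-side: columns
  have hcol : ∀ d : ℕ, ∑' k : ℕ, F (d + 1, k)
      = ((d : ℂ) + 1) * x ^ (d + 1) / (1 - x ^ (d + 1)) := by
    intro d
    have hsum : Summable fun k : ℕ => F (d + 1, k) := hF.prod_factor (d + 1)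
    rw [Summable.tsum_eq_zero_add hsum]
    have h0 : F (d + 1, 0) = 0 := by simp [hFdef]
    have hy : ‖x ^ (d + 1)‖ < 1 := hxm1 d
    have hgeo : HasSum (fun k : ℕ => ((d + 1 : ℕ) : ℂ) * (x ^ (d + 1)) ^ (k + 1))
        (((d + 1 : ℕ) : ℂ) * (x ^ (d + 1) * (1 - x ^ (d + 1))⁻¹)) := by
      have h1 := (hasSum_geometric_of_norm_lt_one hy).mul_left (x ^ (d + 1))
      have h2 : HasSum (fun k : ℕ => (x ^ (d + 1)) ^ (k + 1))
          (x ^ (d + 1) * (1 - x ^ (d + 1))⁻¹) := by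
        refine h1.congr_fun fun k => ?_
        rw [pow_succ]
        ring
      exact h2.mul_left _
    have heq : ∀ k : ℕ, F (d + 1, k + 1) = ((d + 1 : ℕ) : ℂ) * (x ^ (d + 1)) ^ (k + 1) := by
      intro k
      simp only [hFdef, if_neg (Nat.succ_ne_zero k)]
      rw [← pow_mul]
    rw [h0, zero_add, tsum_congr heq, hgeo.tsum_eq]
    push_cast
    rw [div_eq_mul_inv, mul_assoc]
  have hcol0 : ∑' k : ℕ, F (0, k) = 0 := by
    have : ∀ k : ℕ, F (0, k) = 0 := by
      intro k; simp [hFdef]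
    simp only [this, tsum_zero]
  have hval : Summable fun m : ℕ => ((m : ℂ) + 1) * x ^ (m + 1) / (1 - x ^ (m + 1)) :=
    conj2.of_norm
  have hcolS : Summable fun d : ℕ => ∑' k : ℕ, F (d, k) := by
    refine (summable_nat_add_iff 1).mp ?_
    exact hval.congr fun d => (hcol d).symm
  have hSm : ∑' d : ℕ, (∑' k : ℕ, F (d, k))
      = ∑' m : ℕ, ((m : ℂ) + 1) * x ^ (m + 1) / (1 - x ^ (m + 1)) := by
    rw [Summable.tsum_eq_zero_add hcolS, hcol0, zero_add]
    exact tsum_congr hcol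
  calc ∑' n : ℕ, (σ 1 (n + 1) : ℂ) * x ^ (n + 1) = S := hSn.tsum_eq
    _ = ∑' d : ℕ, (∑' k : ℕ, F (d, k)) := Summable.tsum_prod hF
    _ = ∑' m : ℕ, ((m : ℂ) + 1) * x ^ (m + 1) / (1 - x ^ (m + 1)) := hSm
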